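/- Fix an integer p ≥ 2. Let λ and μ be partitions all of whose entries are powers of p, written by multiplicities as λ = [a₀, a₁, …]_p and μ = [b₀, b₁, …]_p, where a_i (resp. b_i) is the number of entries equal to p^i. Fix an index i with a_i ≤ b_i, and let λ̃ be the partition obtained from λ by deleting all a_i entries equal to p^i, and let μ̃ be the partition obtained from μ by deleting a_i of its entries equal to p^i (leaving b_i − a_i of them). Then λ stably embeds into μ if and only if λ̃ stably embeds into μ̃. -/

import Mathlib

/-- An integral partition: a finite (nonempty) multiset of positive integers. -/
def IsPartition (l : Multiset ℕ) : Prop := l ≠ 0 ∧ ∀ x ∈ l, 0 < x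

/-- `Embeds l m` : the entries of `l` can be grouped and the groups assigned
bijectively (as a multiset) to the bins of `m`, each group fitting in its bin.
This is the bin-packing embedding `l ↪ m`. -/
def Embeds (l m : Multiset ℕ) : Prop :=
  ∃ T : Multiset (Multiset ℕ × ℕ),
    (T.map Prod.fst).sum = l ∧ T.map Prod.snd = m ∧ ∀ q ∈ T, q.1.sum ≤ q.2

/-- The product of two partitions: all pairwise products of entries. -/
def mprod (l m : Multiset ℕ) : Multiset ℕ := l.bind fun a => m.map (a * ·)

/-- The `n`-fold product `l^{×n}`. -/
def prodPow (l : Multiset ℕ) : ℕ → Multiset ℕ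
  | 0 => {1}
  | n + 1 => mprod l (prodPow l n)

/-- The `p`-norm of a partition: `(∑ λᵢ^p)^(1/p)`. -/
noncomputable def pnorm (l : Multiset ℕ) (p : ℝ) : ℝ :=
  ((l.map fun a => (a : ℝ) ^ p).sum) ^ (1 / p)

/-- `l ⪯_S m` : for every positive `x`, the sum of the entries of `l` that
are `≥ x` is at most the corresponding sum for `m`. -/
def Supermajorized (l m : Multiset ℕ) : Prop :=
  ∀ x : ℕ, 0 < x →
    ((l.filter fun a => x ≤ a).sum ≤ (m.filter fun a => x ≤ a).sum)

/-- `l s↪ m` : there is a partition `ν` with `l×ν ↪ m×ν`. -/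
def StablyEmbeds (l m : Multiset ℕ) : Prop :=
  ∃ ν : Multiset ℕ, IsPartition ν ∧ Embeds (mprod l ν) (mprod m ν)

/-- `l b↪ m` : for every rational `ε > 0` there are positive integers `N, M`
with `M ≤ N(1+ε)` and `l^{×N} ↪ m^{×M}`. -/
def BulkEmbeds (l m : Multiset ℕ) : Prop :=
  ∀ ε : ℚ, 0 < ε → ∃ N M : ℕ, 0 < N ∧ 0 < M ∧ (M : ℚ) ≤ (N : ℚ) * (1 + ε) ∧
    Embeds (prodPow l N) (prodPow m M)

namespace Aux13

/-- filter distributes over bind -/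
lemma filter_bind {α β : Type*} (s : Multiset α) (f : α → Multiset β) (P : β → Prop)
    [DecidablePred P] : (s.bind f).filter P = s.bind fun a => (f a).filter P := by
  induction s using Multiset.induction with
  | empty => simp
  | cons a s ih => simp [Multiset.cons_bind, Multiset.filter_add, ih]

lemma filter_replicate (n : ℕ) (a : ℕ) (P : ℕ → Prop) [DecidablePred P] :
    (Multiset.replicate n a).filter P = if P a then Multiset.replicate n a else 0 := by
  induction n with
  | zero => simp
  | succ n ih =>
    rw [Multiset.replicate_succ, Multiset.filter_cons, ih]
    by_cases h : P a <;> simp [h, Multiset.replicate_succ]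

lemma sum_sum (M : Multiset (Multiset ℕ)) : M.sum.sum = (M.map Multiset.sum).sum := by
  induction M using Multiset.induction with
  | empty => simp
  | cons a M ih => simp [Multiset.sum_cons, ih]

lemma exists_max (X : Multiset ℕ) (hX : X ≠ 0) : ∃ a ∈ X, ∀ b ∈ X, b ≤ a := by
  induction X using Multiset.induction with
  | empty => simp at hX
  | cons a X ih =>
    by_cases h : X = 0
    · subst h; exact ⟨a, by simp, by simp⟩
    · obtain ⟨c, hc, hmax⟩ := ih h
      rcases le_total a c with h1 | h1
      · exact ⟨c, Multiset.mem_cons_of_mem hc, fun b hb => by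
          rcases Multiset.mem_cons.mp hb with rfl | hb
          · exact h1
          · exact hmax b hb⟩
      · exact ⟨a, Multiset.mem_cons_self a X, fun b hb => by
          rcases Multiset.mem_cons.mp hb with rfl | hb
          · exact le_rfl
          · exact (hmax b hb).trans h1⟩

/-- split a multiset along a decomposition of its image -/
lemma map_split {α β : Type*} [DecidableEq α] [DecidableEq β] (f : α → β) :
    ∀ (A : Multiset β) (T : Multiset α) (B : Multiset β), T.map f = A + B →
    ∃ U V, T = U + V ∧ U.map f = A ∧ V.map f = B := by
  intro A
  induction A using Multiset.induction with
  | empty => exact fun T B h => ⟨0, T, by simp, by simp, by simpa using h⟩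
  | cons a A ih =>
    intro T B h
    have ha : a ∈ T.map f := by rw [h]; simp
    obtain ⟨t, htT, hft⟩ := Multiset.mem_map.mp ha
    have hT : T = t ::ₘ T.erase t := (Multiset.cons_erase htT).symm
    have h' : (T.erase t).map f = A + B := by
      rw [hT] at h
      simp only [Multiset.map_cons, hft] at h
      rw [Multiset.cons_add] at h
      exact (Multiset.cons_inj_right a).mp h
    obtain ⟨U, V, hUV, hU, hV⟩ := ih (T.erase t) B h'
    exact ⟨t ::ₘ U, V, by rw [hT, hUV, Multiset.cons_add],
      by simp [Multiset.map_cons, hft, hU], hV⟩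

/-- a packing witnesses supermajorization -/
lemma embeds_super {X Y : Multiset ℕ} (h : Embeds X Y) : Supermajorized X Y := by
  obtain ⟨T, hfst, hsnd, hle⟩ := h
  intro x hx
  rw [← hfst, ← hsnd]
  clear hfst hsnd
  induction T using Multiset.induction with
  | empty => simp
  | cons q T ih =>
    simp only [Multiset.map_cons, Multiset.sum_cons, Multiset.filter_add,
      Multiset.sum_add, Multiset.filter_cons]
    have hq : q.1.sum ≤ q.2 := hle q (Multiset.mem_cons_self q T)
    have hrest := ih fun r hr => hle r (Multiset.mem_cons_of_mem hr)
    have hhead : (q.1.filter fun a => x ≤ a).sum ≤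
        (if x ≤ q.2 then ({q.2} : Multiset ℕ) else 0).sum := by
      by_cases hf : (q.1.filter fun a => x ≤ a) = 0
      · simp [hf]
      · obtain ⟨b, hb⟩ := Multiset.exists_mem_of_ne_zero hf
        obtain ⟨hbq, hxb⟩ := Multiset.mem_filter.mp hb
        have h1 : (q.1.filter fun a => x ≤ a).sum ≤ q.1.sum := by
          obtain ⟨u, hu⟩ := Multiset.le_iff_exists_add.mp (Multiset.filter_le (fun a => x ≤ a) q.1)
          have h2 := congrArg Multiset.sum hu
          rw [Multiset.sum_add] at h2
          omega
        have h2 : x ≤ q.2 := hxb.trans ((Multiset.single_le_sum (fun _ _ => Nat.zero_le _) b hbq).trans hq)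
        rw [if_pos h2]
        simpa using h1.trans hq
    exact add_le_add hhead hrest

/-- geometric sum of powers -/
lemma geom (p u : ℕ) (hp : 1 ≤ p) :
    ∀ m, (((Multiset.range m).bind fun t => Multiset.replicate (p - 1) (p ^ (u + t))).sum
      + p ^ u = p ^ (u + m)) := by
  intro m
  induction m with
  | zero => simp
  | succ m ih =>
    rw [Multiset.range_succ, Multiset.cons_bind, Multiset.sum_add, Multiset.sum_replicate,
      smul_eq_mul]
    have hw : ∀ w : ℕ, (p - 1) * w + w = p * w := by
      intro w; cases p with
      | zero => omega
      | succ k => simp [Nat.succ_sub_one, Nat.succ_mul]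
    rw [add_assoc, ih, hw, ← pow_succ']
    ring_nf
  

/-- p-power entries: supermajorization implies embedding (greedy packing). -/
lemma greedy (p : ℕ) (hp : 2 ≤ p) :
    ∀ (n : ℕ) (X Y : Multiset ℕ), X.card = n →
    (∀ x ∈ X, ∃ u : ℕ, x = p ^ u) → (∀ y ∈ Y, ∃ u : ℕ, y = p ^ u) →
    Supermajorized X Y → Embeds X Y := by
  intro n
  induction n with
  | zero =>
    intro X Y hcard _ _ _
    rw [Multiset.card_eq_zero] at hcard
    subst hcard
    refine ⟨Y.map fun b => ((0 : Multiset ℕ), b), ?_, ?_, ?_⟩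
    · rw [Multiset.map_map]
      simp
    · rw [Multiset.map_map]
      simp
    · intro q hq
      obtain ⟨b, _, rfl⟩ := Multiset.mem_map.mp hq
      simp
  | succ n ih =>
    intro X Y hcard hX hY hsuper
    have hXne : X ≠ 0 := by
      intro h; rw [h] at hcard; simp at hcard
    obtain ⟨α, hαX, hmax⟩ := exists_max X hXne
    obtain ⟨u, rfl⟩ := hX α hαX
    have hppos : 0 < p := by omega
    have hαpos : 0 < p ^ u := Nat.pow_pos hppos
    -- find a bin β ≥ α in Y
    have hfX : p ^ u ≤ (X.filter fun a => p ^ u ≤ a).sum := by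
      refine Multiset.single_le_sum (fun _ _ => Nat.zero_le _) _ ?_
      exact Multiset.mem_filter.mpr ⟨hαX, le_rfl⟩
    have hfY : 0 < (Y.filter fun a => p ^ u ≤ a).sum :=
      lt_of_lt_of_le (lt_of_lt_of_le hαpos hfX) (hsuper _ hαpos)
    have hfYne : (Y.filter fun a => p ^ u ≤ a) ≠ 0 := by
      intro h; rw [h] at hfY; simp at hfY
    obtain ⟨β, hβf⟩ := Multiset.exists_mem_of_ne_zero hfYne
    obtain ⟨hβY, hαβ⟩ := Multiset.mem_filter.mp hβf
    obtain ⟨s, rfl⟩ := hY β hβY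
    have hus : u ≤ s := by
      by_contra hus
      push_neg at hus
      exact absurd hαβ (not_le.mpr (Nat.pow_lt_pow_right (by omega) hus))
    -- the decomposition of β - α into p-powers ≥ α
    set D : Multiset ℕ :=
      (Multiset.range (s - u)).bind fun t => Multiset.replicate (p - 1) (p ^ (u + t)) with hD
    have hDsum : D.sum + p ^ u = p ^ s := by
      rw [hD]
      have := geom p u (by omega) (s - u)
      rwa [Nat.add_sub_cancel' hus] at this
    have hDmem : ∀ y ∈ D, (∃ t : ℕ, y = p ^ t) ∧ p ^ u ≤ y := by
      intro y hy
      rw [hD] at hy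
      obtain ⟨t, _, hy2⟩ := Multiset.mem_bind.mp hy
      obtain ⟨_, rfl⟩ := Multiset.eq_of_mem_replicate hy2
      exact ⟨⟨u + t, rfl⟩, Nat.pow_le_pow_right hppos (Nat.le_add_right u t)⟩
    set X' := X.erase (p ^ u) with hX'
    set Y' := Y.erase (p ^ s) + D with hY'
    have hXeq : p ^ u ::ₘ X' = X := Multiset.cons_erase hαX
    have hYeq : p ^ s ::ₘ Y.erase (p ^ s) = Y := Multiset.cons_erase hβY
    have hX'sub : ∀ b ∈ X', b ∈ X := fun b hb =>
      Multiset.mem_of_le (Multiset.erase_le _ _) hb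
    -- supermajorization for the reduced problem
    have hsuper' : Supermajorized X' Y' := by
      intro x hx
      rcases le_or_gt x (p ^ u) with hxα | hxα
      · have hXf : ((X.filter fun a => x ≤ a).sum) =
            ((X'.filter fun a => x ≤ a).sum) + p ^ u := by
          rw [← hXeq, Multiset.filter_cons, if_pos (le_trans hxα le_rfl)]
          simp [add_comm]
        have hYf : ((Y.filter fun a => x ≤ a).sum) =
            ((Y.erase (p ^ s)).filter fun a => x ≤ a).sum + p ^ s := by
          rw [← hYeq, Multiset.filter_cons, if_pos (hxα.trans hαβ)]
          simp [add_comm]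
        have hDf : ((D.filter fun a => x ≤ a)).sum = D.sum := by
          congr 1
          rw [Multiset.filter_eq_self]
          exact fun y hy => hxα.trans (hDmem y hy).2
        have hY'f : ((Y'.filter fun a => x ≤ a).sum) =
            ((Y.erase (p ^ s)).filter fun a => x ≤ a).sum + D.sum := by
          rw [hY', Multiset.filter_add, Multiset.sum_add, hDf]
        have := hsuper x hx
        omega
      · have : (X'.filter fun a => x ≤ a) = 0 := by
          rw [Multiset.filter_eq_nil]
          intro b hb
          have : b ≤ p ^ u := hmax b (hX'sub b hb)
          omega
        rw [this]
        simp
    have hcard' : X'.card = n := by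
      rw [hX', Multiset.card_erase_of_mem hαX, hcard]
      rfl
    have hXp' : ∀ x ∈ X', ∃ w : ℕ, x = p ^ w := fun x hx => hX x (hX'sub x hx)
    have hYp' : ∀ y ∈ Y', ∃ w : ℕ, y = p ^ w := by
      intro y hy
      rw [hY'] at hy
      rcases Multiset.mem_add.mp hy with hy | hy
      · exact hY y (Multiset.mem_of_le (Multiset.erase_le _ _) hy)
      · exact (hDmem y hy).1
    obtain ⟨T', h1, h2, h3⟩ := ih X' Y' hcard' hXp' hYp' hsuper'
    -- split T' into the part over Y.erase β and the part over D
    obtain ⟨T₁, T₂, hT', hT₁, hT₂⟩ := map_split Prod.snd (Y.erase (p ^ s)) T' D (by rw [h2, hY'])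
    refine ⟨(p ^ u ::ₘ (T₂.map Prod.fst).sum, p ^ s) ::ₘ T₁, ?_, ?_, ?_⟩
    · rw [Multiset.map_cons, Multiset.sum_cons]
      have hsum : ((T₁.map Prod.fst).sum + (T₂.map Prod.fst).sum) = X' := by
        rw [← Multiset.sum_add, ← Multiset.map_add, ← hT', h1]
      rw [← hXeq]
      have : (p ^ u ::ₘ (T₂.map Prod.fst).sum) + (T₁.map Prod.fst).sum
          = p ^ u ::ₘ ((T₁.map Prod.fst).sum + (T₂.map Prod.fst).sum) := by
        rw [Multiset.cons_add, add_comm ((T₂.map Prod.fst).sum)]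
      rw [this, hsum]
    · rw [Multiset.map_cons, hT₁]
      exact hYeq
    · intro q hq
      rcases Multiset.mem_cons.mp hq with rfl | hq
      · -- the merged group fits in β
      
        have hsums : ((T₂.map Prod.fst).sum).sum = (T₂.map fun r => r.1.sum).sum := by
          rw [sum_sum, Multiset.map_map]
          rfl
        have hle2 : (T₂.map fun r => r.1.sum).sum ≤ (T₂.map Prod.snd).sum := by
          apply Multiset.sum_map_le_sum_map
          intro r hr
          exact h3 r (by rw [hT']; exact Multiset.mem_add.mpr (Or.inr hr))
        simp only [Multiset.sum_cons]
        rw [hT₂] at hle2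
        calc p ^ u + ((T₂.map Prod.fst).sum).sum
            ≤ p ^ u + D.sum := by rw [hsums]; exact Nat.add_le_add_left hle2 _
          _ = p ^ s := by omega
      · exact h3 q (by rw [hT']; exact Multiset.mem_add.mpr (Or.inl hq))


/-- the p-power rounding of a catalyst -/
def rnd (p E : ℕ) (ν : Multiset ℕ) : Multiset ℕ :=
  ν.bind fun v => Multiset.replicate (v * p ^ (E - Nat.log p v)) (p ^ Nat.log p v)

lemma cond_iff (p : ℕ) (hp : 2 ≤ p) (u v x' : ℕ) (hv : 0 < v) :
    (x' ≤ p ^ u * p ^ Nat.log p v) ↔ (p ^ Nat.clog p x' ≤ p ^ u * v) := by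
  have h1 : 1 < p := hp
  rw [← pow_add]
  constructor
  · intro h
    have hk : Nat.clog p x' ≤ u + Nat.log p v := (Nat.clog_le_iff_le_pow h1).mpr h
    calc p ^ Nat.clog p x' ≤ p ^ (u + Nat.log p v) := Nat.pow_le_pow_right (by omega) hk
      _ = p ^ u * p ^ Nat.log p v := pow_add p u _
      _ ≤ p ^ u * v := Nat.mul_le_mul_left _ (Nat.pow_log_le_self p hv.ne')
  · intro h
    have hpu : 0 < p ^ u := Nat.pow_pos (by omega)
    have hvlt : v < p ^ (Nat.log p v + 1) := Nat.lt_pow_succ_log_self h1 v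
    have hlt : p ^ Nat.clog p x' < p ^ (u + Nat.log p v + 1) := by
      calc p ^ Nat.clog p x' ≤ p ^ u * v := h
        _ < p ^ u * p ^ (Nat.log p v + 1) := (mul_lt_mul_iff_right₀ hpu).mpr hvlt
        _ = p ^ (u + Nat.log p v + 1) := by rw [← pow_add, ← Nat.add_assoc]
    have hk : Nat.clog p x' < u + Nat.log p v + 1 := (Nat.pow_lt_pow_iff_right h1).mp hlt
    calc x' ≤ p ^ Nat.clog p x' := Nat.le_pow_clog h1 x'
      _ ≤ p ^ (u + Nat.log p v) := Nat.pow_le_pow_right (by omega) (by omega)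

lemma sum_filter_map (f : ℕ → ℕ) (P : ℕ → Prop) [DecidablePred P] (s : Multiset ℕ) :
    ((s.map f).filter P).sum = (s.map fun v => if P (f v) then f v else 0).sum := by
  induction s using Multiset.induction with
  | empty => simp
  | cons a s ih =>
    rw [Multiset.map_cons, Multiset.filter_cons, Multiset.sum_add, ih, Multiset.map_cons,
      Multiset.sum_cons]
    by_cases h : P (f a) <;> simp [h]

lemma key_id (p : ℕ) (hp : 2 ≤ p) (X ν : Multiset ℕ) (hX : ∀ x ∈ X, ∃ u : ℕ, x = p ^ u)
    (hν : ∀ v ∈ ν, 0 < v) (E : ℕ) (hE : ∀ v ∈ ν, Nat.log p v ≤ E) (x' : ℕ) :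
    ((mprod X (rnd p E ν)).filter fun a => x' ≤ a).sum
      = p ^ E * ((mprod X ν).filter fun a => p ^ Nat.clog p x' ≤ a).sum := by
  unfold mprod
  rw [filter_bind, Multiset.sum_bind, filter_bind, Multiset.sum_bind, ← Multiset.sum_map_mul_left]
  refine congrArg Multiset.sum (Multiset.map_congr rfl ?_)
  intro α hα
  obtain ⟨u, rfl⟩ := hX α hα
  -- expand the rounded catalyst
  unfold rnd
  rw [Multiset.map_bind, filter_bind, Multiset.sum_bind, sum_filter_map, ← Multiset.sum_map_mul_left]
  refine congrArg Multiset.sum (Multiset.map_congr rfl ?_)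
  intro v hv
  rw [Multiset.map_replicate, filter_replicate]
  have hcond := cond_iff p hp u v x' (hν v hv)
  by_cases h : x' ≤ p ^ u * p ^ Nat.log p v
  · rw [if_pos h, if_pos (hcond.mp h), Multiset.sum_replicate, smul_eq_mul]
    have hEe : p ^ (E - Nat.log p v) * p ^ Nat.log p v = p ^ E := by
      rw [← pow_add, Nat.sub_add_cancel (hE v hv)]
    calc v * p ^ (E - Nat.log p v) * (p ^ u * p ^ Nat.log p v)
        = (p ^ (E - Nat.log p v) * p ^ Nat.log p v) * (p ^ u * v) := by ring
      _ = p ^ E * (p ^ u * v) := by rw [hEe]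
  · rw [if_neg h, if_neg (fun hc => h (hcond.mpr hc))]
    simp


lemma super_add_iff (X Y Z : Multiset ℕ) :
    Supermajorized (X + Z) (Y + Z) ↔ Supermajorized X Y := by
  unfold Supermajorized
  refine forall_congr' fun x => imp_congr_right fun hx => ?_
  rw [Multiset.filter_add, Multiset.filter_add, Multiset.sum_add, Multiset.sum_add]
  omega

lemma rnd_ppow (p E : ℕ) (ν : Multiset ℕ) : ∀ y ∈ rnd p E ν, ∃ u : ℕ, y = p ^ u := by
  intro y hy
  obtain ⟨v, _, hy2⟩ := Multiset.mem_bind.mp hy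
  obtain ⟨_, rfl⟩ := Multiset.eq_of_mem_replicate hy2
  exact ⟨Nat.log p v, rfl⟩

lemma mprod_ppow (p : ℕ) (X ν : Multiset ℕ) (hX : ∀ x ∈ X, ∃ u : ℕ, x = p ^ u)
    (hν : ∀ v ∈ ν, ∃ u : ℕ, v = p ^ u) : ∀ y ∈ mprod X ν, ∃ u : ℕ, y = p ^ u := by
  intro y hy
  obtain ⟨a, ha, hy2⟩ := Multiset.mem_bind.mp hy
  obtain ⟨b, hb, rfl⟩ := Multiset.mem_map.mp hy2
  obtain ⟨u, rfl⟩ := hX a ha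
  obtain ⟨w, rfl⟩ := hν b hb
  exact ⟨u + w, (pow_add p u w).symm⟩

/-- Characterization: for p-power partitions, stable embeddability is
equivalent to catalytic supermajorization. -/
theorem char (p : ℕ) (hp : 2 ≤ p) (A B : Multiset ℕ)
    (hA : ∀ x ∈ A, ∃ u : ℕ, x = p ^ u) (hB : ∀ x ∈ B, ∃ u : ℕ, x = p ^ u) :
    StablyEmbeds A B ↔ ∃ ν : Multiset ℕ, IsPartition ν ∧
      Supermajorized (mprod A ν) (mprod B ν) := by
  constructor
  · rintro ⟨ν, hν, hemb⟩
    exact ⟨ν, hν, embeds_super hemb⟩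
  · rintro ⟨ν, ⟨hν0, hνpos⟩, hsup⟩
    set E := Nat.log p ν.sum with hEdef
    have hE : ∀ v ∈ ν, Nat.log p v ≤ E :=
      fun v hv => Nat.log_mono_right (Multiset.le_sum_of_mem hv)
    set ν' := rnd p E ν with hν'
    have hppos : 0 < p := by omega
    have hν'part : IsPartition ν' := by
      constructor
      · obtain ⟨v, hv⟩ := Multiset.exists_mem_of_ne_zero hν0
        have hmem : p ^ Nat.log p v ∈ ν' := by
          refine Multiset.mem_bind.mpr ⟨v, hv, ?_⟩
          refine Multiset.mem_replicate.mpr ⟨?_, rfl⟩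
          have := hνpos v hv
          have : 0 < p ^ (E - Nat.log p v) := Nat.pow_pos hppos
          positivity
        exact fun h => by rw [h] at hmem; simp at hmem
      · intro x hx
        obtain ⟨u, rfl⟩ := rnd_ppow p E ν x hx
        exact Nat.pow_pos hppos
    have hsup' : Supermajorized (mprod A ν') (mprod B ν') := by
      intro x' hx'
      rw [hν', key_id p hp A ν hA hνpos E hE x', key_id p hp B ν hB hνpos E hE x']
      exact Nat.mul_le_mul_left _ (hsup _ (Nat.pow_pos hppos))
    refine ⟨ν', hν'part, ?_⟩
    exact greedy p hp (mprod A ν').card (mprod A ν') (mprod B ν') rfl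
      (mprod_ppow p A ν' hA (rnd_ppow p E ν))
      (mprod_ppow p B ν' hB (rnd_ppow p E ν)) hsup'

end Aux13

/-- Cancellation for stable embeddability in the class of partitions with
entries powers of `p`: if `λ` has `aᵢ ≤ bᵢ` entries equal to `pⁱ`, delete all
of them from `λ` and delete `aᵢ` of the entries `pⁱ` from `μ`; then
`λ s↪ μ` iff the reduced partitions satisfy `λ̃ s↪ μ̃`. -/


theorem stmt_13 (p : ℕ) (hp : 2 ≤ p) (l m : Multiset ℕ)
    (hl : IsPartition l) (hm : IsPartition m)
    (hlp : ∀ x ∈ l, ∃ i : ℕ, x = p ^ i) (hmp : ∀ x ∈ m, ∃ i : ℕ, x = p ^ i)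
    (i : ℕ) (hcount : l.count (p ^ i) ≤ m.count (p ^ i)) :
    StablyEmbeds l m ↔
      StablyEmbeds (l.filter fun x => x ≠ p ^ i)
        (m - Multiset.replicate (l.count (p ^ i)) (p ^ i)) := by
  classical
  set q := p ^ i with hq
  set C := Multiset.replicate (l.count q) q with hC
  set lt := l.filter fun x => x ≠ q with hlt
  set mt := m - C with hmt
  have hlC : lt + C = l := by
    have h1 := Multiset.filter_add_not (fun x => x ≠ q) l
    have h2 : (l.filter fun a => ¬ a ≠ q) = l.filter fun x => x = q :=
      Multiset.filter_congr fun x _ => by simp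
    have h3 : (l.filter fun x => x = q) = Multiset.replicate (l.count q) q :=
      Multiset.filter_eq' l q
    rw [hlt, hC, ← h3, ← h2]
    exact h1
  have hmC : mt + C = m := by
    rw [hmt]
    exact tsub_add_cancel_of_le (Multiset.le_count_iff_replicate_le.mp hcount)
  have hltp : ∀ x ∈ lt, ∃ u : ℕ, x = p ^ u := fun x hx =>
    hlp x (Multiset.mem_of_le (Multiset.filter_le _ _) hx)
  have hmtp : ∀ x ∈ mt, ∃ u : ℕ, x = p ^ u := fun x hx =>
    hmp x (Multiset.mem_of_le tsub_le_self hx)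
  rw [Aux13.char p hp l m hlp hmp, Aux13.char p hp lt mt hltp hmtp]
  have key : ∀ ν : Multiset ℕ,
      Supermajorized (mprod l ν) (mprod m ν) ↔
        Supermajorized (mprod lt ν) (mprod mt ν) := by
    intro ν
    rw [← hlC, ← hmC]
    unfold mprod
    rw [Multiset.add_bind, Multiset.add_bind]
    exact Aux13.super_add_iff _ _ _
  constructor
  · rintro ⟨ν, hν, hsup⟩
    exact ⟨ν, hν, (key ν).mp hsup⟩
  · rintro ⟨ν, hν, hsup⟩
    exact ⟨ν, hν, (key ν).mpr hsup⟩
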